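/- Consider the optimization problem: maximize f(x,y,a,b,c,d) = (a+b+c+d)/(x+y−2a+2d) subject to x,y ∈ [0,1], a+b+c+d ≤ 1/2, and one of the three regimes: (i) a = xy, b = x(1−y), c = (1−x)y, 0 ≤ d ≤ (1−x)(1−y); (ii) a = xy, 0 ≤ b ≤ x(1−y), 0 ≤ c ≤ (1−x)y, d = 0; (iii) 0 ≤ a ≤ xy, b = c = d = 0; with the denominator assumed positive. Then the supremum of f equals (1+√2)/2. -/
import Mathlib

private lemma key_aux (s u q : ℝ) (hs : s^2 = 2) (hs1 : 1 ≤ s) (hu0 : 0 ≤ u)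
    (hu2 : u ≤ 2) (hq : 4*q ≤ u^2) (huq : u - q ≤ 1/2) : 2*s*q ≤ (s-1)*u := by
  have hs0 : (0:ℝ) ≤ s := by linarith
  have hus : u ≤ 2 - s := by
    by_contra h
    push_neg at h
    nlinarith [mul_pos (show (0:ℝ) < u - (2-s) by linarith)
      (show (0:ℝ) < (2+s) - u by linarith)]
  rcases le_or_gt q 0 with h | h
  · nlinarith [mul_nonpos_of_nonneg_of_nonpos (show (0:ℝ) ≤ 2*s by linarith) h,
      mul_nonneg (show (0:ℝ) ≤ s - 1 by linarith) hu0]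
  · have h2u : s^2*u = 2*u := by rw [hs]
    nlinarith [mul_nonneg (mul_nonneg hs0 hu0) (show (0:ℝ) ≤ 2 - s - u by linarith),
      mul_nonneg hs0 (show (0:ℝ) ≤ u^2 - 4*q by linarith)]

private lemma key2_aux (s u p : ℝ) (hs : s^2 = 2) (hs1 : 1 ≤ s)
    (hp : 4*p ≤ u^2) (hp2 : p ≤ 1/2) (hup : 1/2 ≤ u - p) : s - 1 ≤ u - 2*p := by
  rcases le_or_gt u (2-s) with h | h
  · linarith
  · rcases le_or_gt u s with h2 | h2
    · nlinarith [mul_nonneg (show (0:ℝ) ≤ s - u by linarith)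
        (show (0:ℝ) ≤ u - (2-s) by linarith)]
    · linarith

set_option maxHeartbeats 1000000 in
/-- The supremum of (a+b+c+d)/(x+y-2a+2d) over the three feasible regimes
is (1+√2)/2. -/
theorem sup_ratio_eq (S : Set ℝ)
    (hS : S = { v : ℝ | ∃ x y a b c d : ℝ,
      0 ≤ x ∧ x ≤ 1 ∧ 0 ≤ y ∧ y ≤ 1 ∧
      a + b + c + d ≤ 1 / 2 ∧
      ((a = x * y ∧ b = x * (1 - y) ∧ c = (1 - x) * y ∧
          0 ≤ d ∧ d ≤ (1 - x) * (1 - y)) ∨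
        (a = x * y ∧ 0 ≤ b ∧ b ≤ x * (1 - y) ∧ 0 ≤ c ∧ c ≤ (1 - x) * y ∧ d = 0) ∨
        (0 ≤ a ∧ a ≤ x * y ∧ b = 0 ∧ c = 0 ∧ d = 0)) ∧
      0 < x + y - 2 * a + 2 * d ∧
      v = (a + b + c + d) / (x + y - 2 * a + 2 * d) }) :
    IsLUB S ((1 + Real.sqrt 2) / 2) := by
  have hs : Real.sqrt 2 ^ 2 = 2 := Real.sq_sqrt (by norm_num)
  set s := Real.sqrt 2 with hsdef
  have hs0 : 0 ≤ s := Real.sqrt_nonneg 2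
  have hs1 : 1 ≤ s := by nlinarith
  have hs32 : s ≤ 3/2 := by nlinarith
  apply IsGreatest.isLUB
  constructor
  · -- membership: x = y = s/2, a = 1/2, regime (iii)
    rw [hS]
    refine ⟨s/2, s/2, 1/2, 0, 0, 0, by linarith, by linarith, by linarith, by linarith,
      by norm_num, Or.inr (Or.inr ⟨by norm_num, by nlinarith, rfl, rfl, rfl⟩),
      by nlinarith, ?_⟩
    rw [eq_div_iff (by nlinarith)]
    nlinarith
  · rintro v hv
    rw [hS] at hv
    obtain ⟨x, y, a, b, c, d, hx0, hx1, hy0, hy1, hsum, hcase, hD, rfl⟩ := hv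
    rw [div_le_iff₀ hD]
    have hu0 : (0:ℝ) ≤ x + y := by linarith
    have hu2 : x + y ≤ 2 := by linarith
    rcases hcase with ⟨rfl, rfl, rfl, hd0, hd1⟩ | ⟨rfl, hb0, hb1, hc0, hc1, rfl⟩ |
      ⟨ha0, ha1, rfl, rfl, rfl⟩
    · -- regime (i)
      have hq : 4*(x*y - d) ≤ (x+y)^2 := by nlinarith [sq_nonneg (x-y)]
      have huq : (x+y) - (x*y - d) ≤ 1/2 := by nlinarith [hsum]
      have hk := key_aux s (x+y) (x*y - d) hs hs1 hu0 hu2 hq huq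
      nlinarith [hk]
    · -- regime (ii)
      have hp : 4*(x*y) ≤ (x+y)^2 := by nlinarith [sq_nonneg (x-y)]
      have hpN : x*y ≤ 1/2 := by nlinarith [hsum]
      have hNup : x*y + b + c ≤ (x+y) - x*y := by nlinarith [hb1, hc1]
      rcases le_or_gt ((x+y) - x*y) (1/2) with h | h
      · have hk := key_aux s (x+y) (x*y) hs hs1 hu0 hu2 hp (by linarith)
        nlinarith [hk, hNup]
      · have hk := key2_aux s (x+y) (x*y) hs hs1 hp hpN (by linarith)
        nlinarith [mul_nonneg (show (0:ℝ) ≤ 1+s by linarith)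
          (show (0:ℝ) ≤ (x+y) - 2*(x*y) - (s-1) by linarith), hsum]
    · -- regime (iii)
      have hsum' : a ≤ 1/2 := by linarith
      have hsa : s^2*a = 2*a := by rw [hs]
      have h2sa : 2*s*a ≤ x + y := by
        by_contra h
        push_neg at h
        have hpos : 0 < 2*s*a := lt_of_le_of_lt hu0 h
        have h1 : (x+y)^2 < (2*s*a)^2 := by
          calc (x+y)^2 = (x+y)*(x+y) := by ring
            _ ≤ (x+y)*(2*s*a) := mul_le_mul_of_nonneg_left h.le hu0
            _ < (2*s*a)*(2*s*a) := mul_lt_mul_of_pos_right h hpos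
            _ = (2*s*a)^2 := by ring
        have h2 : (2*s*a)^2 = 8*a^2 := by
          have : (2*s*a)^2 = 4*(s^2)*a^2 := by ring
          rw [this, hs]; ring
        have h3 : 8*a^2 ≤ 4*a := by
          nlinarith [mul_nonneg ha0 (show (0:ℝ) ≤ 1/2 - a by linarith)]
        have h5 : 4*(x*y) ≤ (x+y)^2 := by nlinarith [sq_nonneg (x-y)]
        nlinarith
      have hfin : 0 ≤ (1+s) * ((x+y) - 2*s*a) :=
        mul_nonneg (by linarith) (by linarith)
      have hexp : (1+s)*((x+y) - 2*s*a) = (1+s)*(x+y) - 2*(s*a) - 2*a*s^2 := by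
        ring
      rw [hs] at hexp
      have hgoal : (1+s)/2 * (x + y - 2*a + 2*0) =
          ((1+s)*(x+y) - 2*a - 2*(s*a))/2 := by ring
      rw [hgoal]
      linarith [hexp ▸ hfin]
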